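/- For every iteration index ν ≥ 0 and every d ∈ {0,…,N−1}, the estimated value function is unbounded in the age coordinate: V_ν(d,Δ) → +∞ as Δ → ∞. -/

import Mathlib

/-- Transition weights of the source mismatch chain:
`P d d = 1 - 2p` for `0 ≤ d ≤ N-1`; `P d (d±1) = p` for `1 ≤ d ≤ N-2`;
`P 0 1 = 2p`, `P (N-1) (N-2) = 2p`; all other entries `0`. -/
noncomputable def Pw (N : ℕ) (p : ℝ) (d d' : ℕ) : ℝ :=
  if d' = d then 1 - 2 * p
  else if d = 0 ∧ d' = 1 then 2 * p
  else if d = N - 1 ∧ d' = N - 2 then 2 * p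
  else if 1 ≤ d ∧ d ≤ N - 2 ∧ (d' = d + 1 ∨ d' + 1 = d) then p
  else 0

/-- `S[V](d,Δ) = Σ_{d'=0}^{N-1} P_{d,d'} · V(d', Δ'(d'))` where
`Δ'(d') = 0` if `d' = 0` and `Δ'(d') = Δ + d'` otherwise. -/
noncomputable def Ssum (N : ℕ) (p : ℝ) (V : ℕ × ℕ → ℝ) (d Δ : ℕ) : ℝ :=
  ∑ d' ∈ Finset.range N, Pw N p d d' * V (d', if d' = 0 then 0 else Δ + d')

/-- `V⁰_{ν+1}(d,Δ) = Δ + S[V_ν](d,Δ)` (value of idling). -/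
noncomputable def Vact0 (N : ℕ) (p : ℝ) (V : ℕ × ℕ → ℝ) (d Δ : ℕ) : ℝ :=
  (Δ : ℝ) + Ssum N p V d Δ

/-- `V¹_{ν+1}(d,Δ) = Δ + λ + p_s((1-2p)V_ν(0,0) + 2p V_ν(1,1)) + p_f S[V_ν](d,Δ)`
(value of transmitting), with `p_f = 1 - p_s`. -/
noncomputable def Vact1 (N : ℕ) (p ps lam : ℝ) (V : ℕ × ℕ → ℝ) (d Δ : ℕ) : ℝ :=
  (Δ : ℝ) + lam + ps * ((1 - 2 * p) * V (0, 0) + 2 * p * V (1, 1))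
    + (1 - ps) * Ssum N p V d Δ

/-- Interim value `Q_{ν+1}(d,Δ) = min{V⁰_{ν+1}(d,Δ), V¹_{ν+1}(d,Δ)}`. -/
noncomputable def Qit (N : ℕ) (p ps lam : ℝ) (V : ℕ × ℕ → ℝ) (d Δ : ℕ) : ℝ :=
  min (Vact0 N p V d Δ) (Vact1 N p ps lam V d Δ)

/-- The relative value iteration sequence:
`V_0(d,Δ) = Δ` and `V_{ν+1}(x) = Q_{ν+1}(x) - Q_{ν+1}(0,0)`. -/
noncomputable def Vit (N : ℕ) (p ps lam : ℝ) : ℕ → ℕ × ℕ → ℝ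
  | 0 => fun x => (x.2 : ℝ)
  | ν + 1 => fun x =>
      Qit N p ps lam (Vit N p ps lam ν) x.1 x.2
        - Qit N p ps lam (Vit N p ps lam ν) 0 0

/-- `δV_ν(d,Δ) = V¹_ν(d,Δ) - V⁰_ν(d,Δ)` (for `ν ≥ 1`, built from `V_{ν-1}`). -/
noncomputable def dV (N : ℕ) (p ps lam : ℝ) (ν : ℕ) (d Δ : ℕ) : ℝ :=
  Vact1 N p ps lam (Vit N p ps lam (ν - 1)) d Δ
    - Vact0 N p (Vit N p ps lam (ν - 1)) d Δ

open Filter in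
lemma Pw_nonneg' (N : ℕ) (p : ℝ) (hp0 : 0 ≤ p) (hp1 : p ≤ 1 / 3) (d d' : ℕ) :
    0 ≤ Pw N p d d' := by
  unfold Pw
  split_ifs <;> linarith

open Filter in
lemma Ssum_event_ge' (N : ℕ) (p : ℝ) (hN : 0 < N) (hp0 : 0 ≤ p) (hp1 : p ≤ 1 / 3)
    (V : ℕ × ℕ → ℝ) (d : ℕ)
    (hV : ∀ d', 1 ≤ d' → d' < N → Tendsto (fun Δ : ℕ => V (d', Δ)) atTop atTop) :
    ∀ᶠ Δ : ℕ in atTop, Pw N p d 0 * V (0, 0) ≤ Ssum N p V d Δ := by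
  have h : ∀ d' ∈ Finset.range N, ∀ᶠ Δ : ℕ in atTop,
      (d' ≠ 0 → 0 ≤ Pw N p d d' * V (d', Δ + d')) := by
    intro d' hd'
    rcases Nat.eq_zero_or_pos d' with h0 | h1
    · filter_upwards with Δ h; exact absurd h0 h
    · have ht : Tendsto (fun Δ : ℕ => V (d', Δ + d')) atTop atTop :=
        (hV d' h1 (Finset.mem_range.mp hd')).comp
          (tendsto_add_atTop_nat d')
      filter_upwards [ht.eventually_ge_atTop 0] with Δ hΔ _
      exact mul_nonneg (Pw_nonneg' N p hp0 hp1 d d') hΔ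
  have hall := (Filter.eventually_all_finset (Finset.range N)).2 h
  filter_upwards [hall] with Δ hΔ
  have hN0 : 0 ∈ Finset.range N := Finset.mem_range.mpr hN
  unfold Ssum
  rw [← Finset.sum_erase_add _ _ hN0]
  have hnn : 0 ≤ ∑ d' ∈ (Finset.range N).erase 0,
      Pw N p d d' * V (d', if d' = 0 then 0 else Δ + d') := by
    apply Finset.sum_nonneg
    intro d' hmem
    have hne0 : d' ≠ 0 := Finset.ne_of_mem_erase hmem
    rw [if_neg hne0]
    exact hΔ d' (Finset.mem_of_mem_erase hmem) hne0
  norm_num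
  linarith

open Filter in
lemma Vit_main' (N : ℕ) (p ps lam : ℝ) (hN : 2 ≤ N) (hp0 : 0 ≤ p) (hp1 : p ≤ 1 / 3)
    (hps1 : ps ≤ 1) :
    ∀ ν, ∀ d, d < N → Tendsto (fun Δ : ℕ => Vit N p ps lam ν (d, Δ)) atTop atTop := by
  intro ν
  induction ν with
  | zero =>
    intro d _
    simpa [Vit] using tendsto_natCast_atTop_atTop (R := ℝ)
  | succ ν ih =>
    intro d _
    set V := Vit N p ps lam ν with hV
    have hVt : ∀ d', 1 ≤ d' → d' < N → Tendsto (fun Δ : ℕ => V (d', Δ)) atTop atTop :=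
      fun d' _ h => ih d' h
    have hS := Ssum_event_ge' N p (by omega) hp0 hp1 V d hVt
    set C0 := Pw N p d 0 * V (0, 0) with hC0
    set L1 := lam + ps * ((1 - 2 * p) * V (0, 0) + 2 * p * V (1, 1)) + (1 - ps) * C0 with hL1
    set Q00 := Qit N p ps lam V 0 0 with hQ00
    have hlower : ∀ᶠ Δ : ℕ in atTop,
        (Δ : ℝ) + (min C0 L1 - Q00) ≤ Vit N p ps lam (ν + 1) (d, Δ) := by
      filter_upwards [hS] with Δ hΔ
      have h0 : (Δ : ℝ) + C0 ≤ Vact0 N p V d Δ := by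
        unfold Vact0; linarith
      have hmul : (1 - ps) * C0 ≤ (1 - ps) * Ssum N p V d Δ :=
        mul_le_mul_of_nonneg_left hΔ (by linarith)
      have h1 : (Δ : ℝ) + L1 ≤ Vact1 N p ps lam V d Δ := by
        rw [hL1]; unfold Vact1; linarith
      have hQ : (Δ : ℝ) + min C0 L1 ≤ Qit N p ps lam V d Δ := by
        unfold Qit
        refine le_min (le_trans ?_ h0) (le_trans ?_ h1)
        · exact add_le_add_right (min_le_left _ _) _
        · exact add_le_add_right (min_le_right _ _) _
      have : Vit N p ps lam (ν + 1) (d, Δ) = Qit N p ps lam V d Δ - Q00 := rfl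
      rw [this]
      linarith
    refine tendsto_atTop_mono' atTop hlower ?_
    exact tendsto_atTop_add_const_right atTop _ (tendsto_natCast_atTop_atTop (R := ℝ))

/-- for every iteration `ν ≥ 0` and every `d ∈ {0,…,N-1}`, the estimated
value function is unbounded in the age coordinate: `V_ν(d,Δ) → +∞` as `Δ → ∞`. -/
theorem Vit_tendsto_atTop_in_age
    (N : ℕ) (p ps lam : ℝ)
    (hN : 2 ≤ N) (hp0 : 0 ≤ p) (hp1 : p ≤ 1 / 3)
    (hps0 : 0 < ps) (hps1 : ps ≤ 1) (hlam : 0 ≤ lam)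
    (ν d : ℕ) (hd : d ≤ N - 1) :
    Filter.Tendsto (fun Δ : ℕ => Vit N p ps lam ν (d, Δ))
      Filter.atTop Filter.atTop := by
  exact Vit_main' N p ps lam hN hp0 hp1 hps1 ν d (by omega)
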